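/- Let K be a simplicial complex and T ∈ K a face. Then for u ∈ T, the link of the edge {u, v_T} in Stellar(T, K) equals ∂(T \ {u}) * lk(T, K), where ∂(T \ {u}) denotes the boundary complex of the simplex on T \ {u}. -/

import Mathlib

def IsComplex (K : Finset (Finset ℕ)) : Prop :=
  ∅ ∈ K ∧ ∀ s ∈ K, ∀ t ⊆ s, t ∈ K

/-- The (open) star `st(T,K) = {S ∈ K : T ⊆ S}`. -/
def starC (T : Finset ℕ) (K : Finset (Finset ℕ)) : Finset (Finset ℕ) :=
  K.filter fun s => T ⊆ s

/-- The link `lk(T,K) = {S ∈ K : S ∩ T = ∅, S ∪ T ∈ K}`. -/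
def linkC (T : Finset ℕ) (K : Finset (Finset ℕ)) : Finset (Finset ℕ) :=
  K.filter fun s => s ∩ T = ∅ ∧ s ∪ T ∈ K

/-- The boundary complex `∂T` of the simplex on `T`: all proper subsets of `T`. -/
def bdry (T : Finset ℕ) : Finset (Finset ℕ) := T.powerset.erase T

/-- The join of two complexes (on disjoint vertex sets). -/
def joinC (K L : Finset (Finset ℕ)) : Finset (Finset ℕ) :=
  (K ×ˢ L).image fun p => p.1 ∪ p.2

/-- The stellar subdivision
`Stellar(T,K) = (K \ st(T,K)) ∪ ({v_T} * ∂T * lk(T,K))`, with `v` the new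
vertex `v_T`. -/
def stellar (T : Finset ℕ) (K : Finset (Finset ℕ)) (v : ℕ) : Finset (Finset ℕ) :=
  (K \ starC T K) ∪ joinC (({v} : Finset ℕ).powerset) (joinC (bdry T) (linkC T K))

lemma mem_joinC {A B : Finset (Finset ℕ)} {s : Finset ℕ} :
    s ∈ joinC A B ↔ ∃ a ∈ A, ∃ b ∈ B, a ∪ b = s := by
  simp [joinC, Finset.mem_image, Finset.mem_product]
  constructor
  · rintro ⟨a, b, ⟨ha, hb⟩, h⟩; exact ⟨a, ha, b, hb, h⟩
  · rintro ⟨a, ha, b, hb, h⟩; exact ⟨a, b, ⟨ha, hb⟩, h⟩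

lemma mem_bdry {T s : Finset ℕ} : s ∈ bdry T ↔ s ⊆ T ∧ s ≠ T := by
  simp [bdry, and_comm]

/-- for a face `T ∈ K` and `u ∈ T`, the link of the edge
`{u, v_T}` in `Stellar(T,K)` equals `∂(T \ {u}) * lk(T,K)`. -/
theorem link_edge_stellar
    (K : Finset (Finset ℕ)) (T : Finset ℕ) (v : ℕ) (u : ℕ)
    (hK : IsComplex K) (hT : T ∈ K) (hT2 : 2 ≤ T.card) (hu : u ∈ T)
    (hv : ∀ s ∈ K, v ∉ s) :
    linkC {u, v} (stellar T K v) = joinC (bdry (T.erase u)) (linkC T K) := by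
  have hvT : v ∉ T := hv T hT
  have huv : u ≠ v := fun h => hvT (h ▸ hu)
  ext S
  constructor
  · intro h
    rw [linkC, Finset.mem_filter] at h
    obtain ⟨hS, hdisj, hSuv⟩ := h
    have huS : u ∉ S := by
      intro hx
      have : u ∈ S ∩ ({u, v} : Finset ℕ) := Finset.mem_inter.2 ⟨hx, by simp⟩
      simp [hdisj] at this
    have hvS : v ∉ S := by
      intro hx
      have : v ∈ S ∩ ({u, v} : Finset ℕ) := Finset.mem_inter.2 ⟨hx, by simp⟩
      simp [hdisj] at this
    rw [stellar, Finset.mem_union] at hSuv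
    rcases hSuv with hmem | hmem
    · exfalso
      have : S ∪ {u, v} ∈ K := (Finset.mem_sdiff.1 hmem).1
      exact hv _ this (by simp)
    · rw [mem_joinC] at hmem
      obtain ⟨V, hV, W, hW, hVW⟩ := hmem
      rw [mem_joinC] at hW
      obtain ⟨B, hB, L, hL, hBL⟩ := hW
      rw [mem_bdry] at hB
      obtain ⟨hBT, hBne⟩ := hB
      rw [linkC, Finset.mem_filter] at hL
      obtain ⟨hLK, hLT, hLTK⟩ := hL
      have hV' : V ⊆ {v} := Finset.mem_powerset.1 hV
      have hvB : v ∉ B := fun h => hvT (hBT h)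
      have hvL : v ∉ L := hv L hLK
      have huL : u ∉ L := by
        intro h
        have : u ∈ L ∩ T := Finset.mem_inter.2 ⟨h, hu⟩
        simp [hLT] at this
      have key : V ∪ (B ∪ L) = S ∪ {u, v} := hBL ▸ hVW
      have huB : u ∈ B := by
        have : u ∈ V ∪ (B ∪ L) := by rw [key]; simp
        rcases Finset.mem_union.1 this with h | h
        · exact absurd (Finset.mem_singleton.1 (hV' h)) huv
        · rcases Finset.mem_union.1 h with h | h
          · exact h
          · exact absurd h huL
      have hSeq : S = B.erase u ∪ L := by
        ext x
        constructor
        · intro hx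
          have hxu : x ≠ u := fun h => huS (h ▸ hx)
          have hxv : x ≠ v := fun h => hvS (h ▸ hx)
          have : x ∈ V ∪ (B ∪ L) := by rw [key]; exact Finset.mem_union_left _ hx
          rcases Finset.mem_union.1 this with h | h
          · exact absurd (Finset.mem_singleton.1 (hV' h)) hxv
          · rcases Finset.mem_union.1 h with h | h
            · exact Finset.mem_union_left _ (Finset.mem_erase.2 ⟨hxu, h⟩)
            · exact Finset.mem_union_right _ h
        · intro hx
          rcases Finset.mem_union.1 hx with h | h
          · obtain ⟨hxu, hxB⟩ := Finset.mem_erase.1 h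
            have : x ∈ S ∪ {u, v} := by
              rw [← key]; exact Finset.mem_union_right _ (Finset.mem_union_left _ hxB)
            rcases Finset.mem_union.1 this with h' | h'
            · exact h'
            · simp at h'
              rcases h' with h' | h'
              · exact absurd h' hxu
              · exact absurd h' (fun hh => hvB (hh ▸ hxB))
          · have : x ∈ S ∪ {u, v} := by
              rw [← key]; exact Finset.mem_union_right _ (Finset.mem_union_right _ h)
            rcases Finset.mem_union.1 this with h' | h'
            · exact h'
            · simp at h'
              rcases h' with h' | h'
              · exact absurd (h' ▸ h) huL
              · exact absurd (h' ▸ h) hvL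
      rw [mem_joinC]
      refine ⟨B.erase u, ?_, L, ?_, hSeq.symm⟩
      · rw [mem_bdry]
        refine ⟨Finset.erase_subset_erase u hBT, ?_⟩
        intro hEq
        apply hBne
        have : insert u (B.erase u) = insert u (T.erase u) := by rw [hEq]
        rwa [Finset.insert_erase huB, Finset.insert_erase hu] at this
      · rw [linkC, Finset.mem_filter]; exact ⟨hLK, hLT, hLTK⟩
  · intro h
    rw [mem_joinC] at h
    obtain ⟨B, hB, L, hL, hBL⟩ := h
    rw [mem_bdry] at hB
    obtain ⟨hBT, hBne⟩ := hB
    rw [linkC, Finset.mem_filter] at hL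
    obtain ⟨hLK, hLT, hLTK⟩ := hL
    have hBT' : B ⊆ T := hBT.trans (Finset.erase_subset u T)
    have huB : u ∉ B := fun h => (Finset.mem_erase.1 (hBT h)).1 rfl
    have huL : u ∉ L := by
      intro h
      have : u ∈ L ∩ T := Finset.mem_inter.2 ⟨h, hu⟩
      simp [hLT] at this
    have hvL : v ∉ L := hv L hLK
    have hvB : v ∉ B := fun h => hvT (hBT' h)
    have huS : u ∉ S := by rw [← hBL]; simp [huB, huL]
    have hvS : v ∉ S := by rw [← hBL]; simp [hvB, hvL]
    have hSK : S ∈ K := by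
      refine hK.2 (L ∪ T) hLTK S ?_
      rw [← hBL]
      exact Finset.union_subset (hBT'.trans (Finset.subset_union_right))
        Finset.subset_union_left
    -- there is x ∈ T.erase u, x ∉ B
    obtain ⟨x, hxTe, hxB⟩ : ∃ x ∈ T.erase u, x ∉ B := by
      by_contra hc
      push_neg at hc
      exact hBne (Finset.Subset.antisymm hBT hc)
    have hxu : x ≠ u := (Finset.mem_erase.1 hxTe).1
    have hxT : x ∈ T := (Finset.mem_erase.1 hxTe).2
    rw [linkC, Finset.mem_filter]
    refine ⟨?_, ?_, ?_⟩
    · rw [stellar, Finset.mem_union]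
      left
      rw [Finset.mem_sdiff]
      refine ⟨hSK, ?_⟩
      rw [starC, Finset.mem_filter]
      rintro ⟨-, hTS⟩
      exact huS (hTS hu)
    · apply Finset.eq_empty_of_forall_notMem
      intro y hy
      obtain ⟨hyS, hyuv⟩ := Finset.mem_inter.1 hy
      simp at hyuv
      rcases hyuv with rfl | rfl
      · exact huS hyS
      · exact hvS hyS
    · rw [stellar, Finset.mem_union]
      right
      rw [mem_joinC]
      refine ⟨{v}, by simp, insert u B ∪ L, ?_, ?_⟩
      · rw [mem_joinC]
        refine ⟨insert u B, ?_, L, ?_, rfl⟩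
        · rw [mem_bdry]
          refine ⟨Finset.insert_subset hu hBT', ?_⟩
          intro hEq
          apply hxB
          have : x ∈ insert u B := hEq ▸ hxT
          rcases Finset.mem_insert.1 this with h | h
          · exact absurd h hxu
          · exact h
        · rw [linkC, Finset.mem_filter]; exact ⟨hLK, hLT, hLTK⟩
      · rw [← hBL]
        ext y
        simp [Finset.mem_union, Finset.mem_insert]
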